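/- Let G be a stitched 2-ichromatic ordered graph with parts of sizes m and n, and let r = min(m,n) - 1. Then the 2-color ordered Ramsey number satisfies R(G) ≥ 4r + 1. -/

import Mathlib

/-- A `t`-edge-coloring `c` of the complete graph on the ordered vertex set `Fin N`
contains a monochromatic ordered copy of the ordered graph `G` on `Fin M`. -/
def HasMonoCopy {M N t : ℕ} (G : SimpleGraph (Fin M)) (c : Fin N → Fin N → Fin t) : Prop :=
  ∃ k : Fin t, ∃ f : Fin M → Fin N, StrictMono f ∧
    ∀ u v : Fin M, u < v → G.Adj u v → c (f u) (f v) = k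

/-- The `t`-color ordered Ramsey number of the ordered graph `G`: the least `N` such that
every `t`-coloring of the edges of the complete graph on `Fin N` contains a monochromatic
ordered copy of `G`. -/
noncomputable def orderedRamsey {M : ℕ} (t : ℕ) (G : SimpleGraph (Fin M)) : ℕ :=
  sInf {N : ℕ | ∀ c : Fin N → Fin N → Fin t, HasMonoCopy G c}

/-- An interval coloring of an ordered graph with `k` parts, encoded as a monotone
surjection onto `Fin k` whose fibers (the parts, which are intervals of consecutive
vertices) are independent sets. -/
def IsIntervalColoring {N k : ℕ} (G : SimpleGraph (Fin N)) (p : Fin N → Fin k) : Prop :=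
  Monotone p ∧ Function.Surjective p ∧ ∀ u v : Fin N, G.Adj u v → p u ≠ p v

/-- The interval chromatic number of an ordered graph. -/
noncomputable def intervalChromatic {N : ℕ} (G : SimpleGraph (Fin N)) : ℕ :=
  sInf {k : ℕ | ∃ p : Fin N → Fin k, IsIntervalColoring G p}

private lemma fin2cases : ∀ a : Fin 2, a = 0 ∨ a = 1 := by decide

/-- Greedy pre-homogeneous sequence for 2-colorings. -/
private lemma myRamseyList (c : ℕ → ℕ → Fin 2) :
    ∀ (L : ℕ) (V : Finset ℕ), 2 ^ L ≤ V.card →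
    ∃ xs : List (ℕ × Fin 2), xs.length = L ∧ (∀ p ∈ xs, p.1 ∈ V) ∧
      xs.Pairwise (fun p q => p.1 < q.1 ∧ c p.1 q.1 = p.2) := by
  intro L
  induction L with
  | zero => intro V _; exact ⟨[], rfl, by simp, by simp⟩
  | succ L ih =>
    intro V h
    have hV : V.Nonempty := Finset.card_pos.1 (lt_of_lt_of_le (pow_pos (by norm_num) _) h)
    set v := V.min' hV with hv
    have hvV : v ∈ V := Finset.min'_mem V hV
    have hW : (V.erase v).card = V.card - 1 := Finset.card_erase_of_mem hvV
    have hsplit := Finset.card_filter_add_card_filter_not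
      (s := V.erase v) (p := fun w => c v w = 0)
    have hpow : 2 ^ (L + 1) = 2 ^ L * 2 := pow_succ 2 L
    have hkey : 2 ^ L ≤ ((V.erase v).filter (fun w => c v w = 0)).card ∨
        2 ^ L ≤ ((V.erase v).filter (fun w => ¬ c v w = 0)).card := by omega
    obtain ⟨lab, Wi, hsub, hcard, hcol⟩ :
        ∃ (lab : Fin 2) (Wi : Finset ℕ), Wi ⊆ V.erase v ∧ 2 ^ L ≤ Wi.card ∧
          ∀ w ∈ Wi, c v w = lab := by
      rcases hkey with h' | h'
      · exact ⟨0, _, Finset.filter_subset _ _, h', fun w hw => (Finset.mem_filter.1 hw).2⟩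
      · refine ⟨1, _, Finset.filter_subset _ _, h', fun w hw => ?_⟩
        have h2 := (Finset.mem_filter.1 hw).2
        rcases fin2cases (c v w) with h0 | h1
        · exact absurd h0 h2
        · exact h1
    obtain ⟨xs, hlen, hmemx, hpw⟩ := ih Wi hcard
    refine ⟨(v, lab) :: xs, by simp [hlen], ?_, ?_⟩
    · intro p hp
      rcases List.mem_cons.1 hp with rfl | hp
      · exact hvV
      · exact Finset.mem_of_mem_erase (hsub (hmemx p hp))
    · refine List.pairwise_cons.2 ⟨?_, hpw⟩
      intro q hq
      have hqW : q.1 ∈ V.erase v := hsub (hmemx q hq)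
      have hne : q.1 ≠ v := (Finset.mem_erase.1 hqW).1
      have hle : v ≤ q.1 := Finset.min'_le V q.1 (Finset.mem_of_mem_erase hqW)
      exact ⟨lt_of_le_of_ne hle (Ne.symm hne), hcol q.1 (hmemx q hq)⟩

private lemma count2 (l : List (ℕ × Fin 2)) :
    (l.filter (fun p => p.2 = 0)).length + (l.filter (fun p => p.2 = 1)).length = l.length := by
  induction l with
  | nil => simp
  | cons a l ih =>
    rcases fin2cases a.2 with h | h
    · have h1 : ¬ (a.2 = 1) := by rw [h]; decide
      simp [List.filter_cons, h, h1]
      omega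
    · have h1 : ¬ (a.2 = 0) := by rw [h]; decide
      simp [List.filter_cons, h, h1]
      omega

/-- Two-coloring Ramsey: a monochromatic ordered clique of size `s` in `[0, N)`. -/
private lemma myRamsey (c : ℕ → ℕ → Fin 2) (s N : ℕ) (h : 2 ^ (2 * s) ≤ N) :
    ∃ (k : Fin 2) (g : Fin s → ℕ), StrictMono g ∧ (∀ i, g i < N) ∧
      ∀ i j : Fin s, i < j → c (g i) (g j) = k := by
  obtain ⟨xs, hlen, hmem, hpw⟩ := myRamseyList c (2 * s) (Finset.range N)
    (by simpa using h)
  have hcnt := count2 xs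
  rw [hlen] at hcnt
  obtain ⟨kk, hkk⟩ : ∃ kk : Fin 2, s ≤ (xs.filter (fun p => p.2 = kk)).length := by
    rcases (by omega : s ≤ (xs.filter (fun p => p.2 = 0)).length ∨
        s ≤ (xs.filter (fun p => p.2 = 1)).length) with h' | h'
    · exact ⟨0, h'⟩
    · exact ⟨1, h'⟩
  set ys := xs.filter (fun p => p.2 = kk) with hys
  have hyspw : ys.Pairwise (fun p q => p.1 < q.1 ∧ c p.1 q.1 = p.2) :=
    List.Pairwise.sublist (List.filter_sublist (l := xs)) hpw
  have hget := List.pairwise_iff_get.1 hyspw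
  have hlab : ∀ p ∈ ys, p.2 = kk := by
    intro p hp
    have := (List.mem_filter.1 hp).2
    simpa using this
  have hmemy : ∀ p ∈ ys, p.1 < N := by
    intro p hp
    have := hmem p (List.mem_of_mem_filter hp)
    simpa using this
  refine ⟨kk, fun i => (ys.get ⟨i.1, lt_of_lt_of_le i.isLt hkk⟩).1, ?_, ?_, ?_⟩
  · intro i j hij
    exact (hget _ _ (Fin.mk_lt_mk.2 hij) ).1
  · intro i
    exact hmemy _ (List.get_mem ys _)
  · intro i j hij
    have h2 := (hget ⟨i.1, lt_of_lt_of_le i.isLt hkk⟩ ⟨j.1, lt_of_lt_of_le j.isLt hkk⟩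
      (Fin.mk_lt_mk.2 hij)).2
    rw [hlab _ (List.get_mem ys _)] at h2
    exact h2

private lemma existsRamseyN {M : ℕ} (G : SimpleGraph (Fin M)) :
    ∀ c : Fin (2 ^ (2 * M)) → Fin (2 ^ (2 * M)) → Fin 2, HasMonoCopy G c := by
  intro c
  obtain ⟨k, g, hg, hlt, hcol⟩ := myRamsey
    (fun x y => if hx : x < 2 ^ (2 * M) then
      if hy : y < 2 ^ (2 * M) then c ⟨x, hx⟩ ⟨y, hy⟩ else 0 else 0) M (2 ^ (2 * M)) le_rfl
  refine ⟨k, fun i => ⟨g i, hlt i⟩, fun i j hij => Fin.mk_lt_mk.2 (hg hij), ?_⟩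
  intro u v huv _
  have h' : (if hx : g u < 2 ^ (2 * M) then
      if hy : g v < 2 ^ (2 * M) then c ⟨g u, hx⟩ ⟨g v, hy⟩ else 0 else 0) = k :=
    hcol u v huv
  rw [dif_pos (hlt u), dif_pos (hlt v)] at h'
  exact h'

/-- If `G` is a stitched 2-ichromatic ordered graph with parts of sizes `m` and `n`,
then `R(G) ≥ 4r + 1` where `r = min(m,n) - 1`. -/
theorem stmt0 {m n : ℕ} (hm : 1 ≤ m) (hn : 1 ≤ n)
    (G : SimpleGraph (Fin (m + n)))
    (hichrom : intervalChromatic G = 2)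
    (hpart1 : ∀ u v : Fin (m + n), (u : ℕ) < m → (v : ℕ) < m → ¬ G.Adj u v)
    (hpart2 : ∀ u v : Fin (m + n), m ≤ (u : ℕ) → m ≤ (v : ℕ) → ¬ G.Adj u v)
    (hstitched : G.Reachable ⟨0, by omega⟩ ⟨m - 1, by omega⟩ ∧
      G.Reachable ⟨0, by omega⟩ ⟨m, by omega⟩ ∧
      G.Reachable ⟨0, by omega⟩ ⟨m + n - 1, by omega⟩) :
    4 * (min m n - 1) + 1 ≤ orderedRamsey 2 G := by
  unfold orderedRamsey
  refine le_csInf ⟨2 ^ (2 * (m + n)), existsRamseyN G⟩ ?_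
  intro N hN
  by_contra hcon
  push_neg at hcon
  set r := min m n - 1 with hrdef
  have hNle : N ≤ 4 * r := by omega
  rcases Nat.eq_zero_or_pos r with hr0 | hr
  · -- then N = 0 and Fin N is empty
    obtain ⟨k, f, hf, hcol⟩ := hN (fun _ _ => 0)
    have := (f ⟨0, by omega⟩).isLt
    omega
  · have hmr : r + 1 ≤ m := by omega
    have hnr : r + 1 ≤ n := by omega
    obtain ⟨k, f, hf, hcol⟩ := hN (fun x y =>
      ⟨((x : ℕ) / r + (y : ℕ) / r) % 2, Nat.mod_lt _ (by omega)⟩)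
    have hk2 : (k : ℕ) < 2 := k.isLt
    -- gap lemma for strictly monotone maps
    have hgap : ∀ (d : ℕ) (i j : Fin (m + n)), (i : ℕ) + d = (j : ℕ) →
        ((f i : ℕ)) + d ≤ (f j : ℕ) := by
      intro d
      induction d with
      | zero =>
        intro i j hij
        have : i = j := Fin.ext (by omega)
        subst this; simp
      | succ d ihd =>
        intro i j hij
        have hj1 : (j : ℕ) - 1 < m + n := by omega
        have h1 := ihd i ⟨(j : ℕ) - 1, hj1⟩ (by simp; omega)
        have h2 : f ⟨(j : ℕ) - 1, hj1⟩ < f j := hf (Fin.lt_def.2 (by simp; omega))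
        have h2' : ((f ⟨(j : ℕ) - 1, hj1⟩ : Fin N) : ℕ) < (f j : ℕ) := Fin.lt_def.1 h2
        omega
    -- invariant along edges
    have hedge : ∀ x y : Fin (m + n), G.Adj x y →
        ((f x : ℕ) / r % 2 + (k : ℕ) * (if (x : ℕ) < m then 0 else 1)) % 2
          = ((f y : ℕ) / r % 2 + (k : ℕ) * (if (y : ℕ) < m then 0 else 1)) % 2 := by
      have main : ∀ x y : Fin (m + n), x < y → G.Adj x y →
          ((f x : ℕ) / r % 2 + (k : ℕ) * (if (x : ℕ) < m then 0 else 1)) % 2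
            = ((f y : ℕ) / r % 2 + (k : ℕ) * (if (y : ℕ) < m then 0 else 1)) % 2 := by
        intro x y hlt hadj
        have hxy : (x : ℕ) < (y : ℕ) := Fin.lt_def.1 hlt
        have hx : (x : ℕ) < m := by
          by_contra hx
          exact hpart2 x y (by omega) (by omega) hadj
        have hy : ¬ (y : ℕ) < m := fun hy => hpart1 x y hx hy hadj
        have hc := hcol x y hlt hadj
        have hcv : ((f x : ℕ) / r + (f y : ℕ) / r) % 2 = (k : ℕ) := by rw [← hc]
        rw [if_pos hx, if_neg hy]
        obtain ⟨qx, hqx⟩ : ∃ q, q = (f x : ℕ) / r := ⟨_, rfl⟩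
        obtain ⟨qy, hqy⟩ : ∃ q, q = (f y : ℕ) / r := ⟨_, rfl⟩
        rw [← hqx, ← hqy] at hcv ⊢
        omega
      intro x y hadj
      rcases lt_trichotomy x y with h | h | h
      · exact main x y h hadj
      · exact absurd h hadj.ne
      · exact (main y x h hadj.symm).symm
    have key : ∀ u v : Fin (m + n), G.Reachable u v →
        ((f u : ℕ) / r % 2 + (k : ℕ) * (if (u : ℕ) < m then 0 else 1)) % 2
          = ((f v : ℕ) / r % 2 + (k : ℕ) * (if (v : ℕ) < m then 0 else 1)) % 2 := by
      intro u v h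
      obtain ⟨p⟩ := h
      induction p with
      | nil => rfl
      | cons h p ihp => exact (hedge _ _ h).trans ihp
    -- named vertex proofs
    have h0 : 0 < m + n := by omega
    have hA : m - 1 < m + n := by omega
    have hB : m < m + n := by omega
    have hC : m + n - 1 < m + n := by omega
    have R1 : G.Reachable ⟨0, h0⟩ ⟨m - 1, hA⟩ := hstitched.1
    have R2 : G.Reachable ⟨0, h0⟩ ⟨m, hB⟩ := hstitched.2.1
    have R3 : G.Reachable ⟨0, h0⟩ ⟨m + n - 1, hC⟩ := hstitched.2.2
    have E1 := key _ _ R1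
    have E2 := key _ _ R2
    have E3 := key _ _ R3
    have c0 : ((⟨0, h0⟩ : Fin (m + n)) : ℕ) < m := hm
    have cA : ((⟨m - 1, hA⟩ : Fin (m + n)) : ℕ) < m := by show m - 1 < m; omega
    have cB : ¬ ((⟨m, hB⟩ : Fin (m + n)) : ℕ) < m := by show ¬ m < m; omega
    have cC : ¬ ((⟨m + n - 1, hC⟩ : Fin (m + n)) : ℕ) < m := by show ¬ m + n - 1 < m; omega
    rw [if_pos c0, if_pos cA] at E1
    rw [if_pos c0, if_neg cB] at E2
    rw [if_pos c0, if_neg cC] at E3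
    -- numeric facts
    have g1 := hgap (m - 1) ⟨0, h0⟩ ⟨m - 1, hA⟩ (by show 0 + (m - 1) = m - 1; omega)
    have g2 := hgap (n - 1) ⟨m, hB⟩ ⟨m + n - 1, hC⟩ (by show m + (n - 1) = m + n - 1; omega)
    have g3 : ((f ⟨m - 1, hA⟩ : Fin N) : ℕ) < ((f ⟨m, hB⟩ : Fin N) : ℕ) :=
      Fin.lt_def.1 (hf (Fin.mk_lt_mk.2 (by omega)))
    have g4 : ((f ⟨m + n - 1, hC⟩ : Fin N) : ℕ) < N := (f _).isLt
    -- abstract the four quotients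
    obtain ⟨q0, hq0⟩ : ∃ q, q = ((f ⟨0, h0⟩ : Fin N) : ℕ) / r := ⟨_, rfl⟩
    obtain ⟨qa, hqa⟩ : ∃ q, q = ((f ⟨m - 1, hA⟩ : Fin N) : ℕ) / r := ⟨_, rfl⟩
    obtain ⟨qb, hqb⟩ : ∃ q, q = ((f ⟨m, hB⟩ : Fin N) : ℕ) / r := ⟨_, rfl⟩
    obtain ⟨qc, hqc⟩ : ∃ q, q = ((f ⟨m + n - 1, hC⟩ : Fin N) : ℕ) / r := ⟨_, rfl⟩
    have F1 : (q0 % 2 + (k : ℕ) * 0) % 2 = (qa % 2 + (k : ℕ) * 0) % 2 := by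
      rw [hq0, hqa]; exact E1
    have F2 : (q0 % 2 + (k : ℕ) * 0) % 2 = (qb % 2 + (k : ℕ) * 1) % 2 := by
      rw [hq0, hqb]; exact E2
    have F3 : (q0 % 2 + (k : ℕ) * 0) % 2 = (qc % 2 + (k : ℕ) * 1) % 2 := by
      rw [hq0, hqc]; exact E3
    have F4 : 1 ≤ qa := by rw [hqa]; exact (Nat.one_le_div_iff hr).2 (by omega)
    have F5 : qa < 3 := by rw [hqa]; exact (Nat.div_lt_iff_lt_mul hr).2 (by omega)
    have F6 : 1 ≤ qb := by rw [hqb]; exact (Nat.one_le_div_iff hr).2 (by omega)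
    have F7 : qb < 3 := by rw [hqb]; exact (Nat.div_lt_iff_lt_mul hr).2 (by omega)
    have F8 : qa ≤ qb := by rw [hqa, hqb]; exact Nat.div_le_div_right (by omega)
    have F9 : qa = 1 → q0 = 0 := by
      intro h
      have hA2 : ((f ⟨m - 1, hA⟩ : Fin N) : ℕ) < 2 * r :=
        (Nat.div_lt_iff_lt_mul hr).1 (by rw [← hqa]; omega)
      rw [hq0]; exact Nat.div_eq_of_lt (by omega)
    have F10 : qb = 2 → qc = 3 := by
      intro h
      have hB2 : 2 * r ≤ ((f ⟨m, hB⟩ : Fin N) : ℕ) :=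
        (Nat.le_div_iff_mul_le hr).1 (by rw [← hqb]; omega)
      have hc3 : 3 ≤ qc := by rw [hqc]; exact (Nat.le_div_iff_mul_le hr).2 (by omega)
      have hc4 : qc < 4 := by rw [hqc]; exact (Nat.div_lt_iff_lt_mul hr).2 (by omega)
      omega
    omega
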